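/- Let X be a real Hilbert space, F : X → X a monotone operator, and suppose that for all x ∈ M one has γ_x := ⟨F(x) − F(x†), x − x†⟩ < e^{-1} and the logarithmic Lavrentiev-type variational source condition ⟨x† − x̄, x† − x⟩ ≤ β‖x − x†‖² + φ(γ_x), where φ(t) = 1/(−ln t) for t ∈ (0,1) and φ(0) = 0, β ∈ [0,1), M ⊆ X, and F(x†) = y. Then there exist K > 0 and δ₀ ∈ (0,1) such that for every δ ∈ (0, δ₀], every yδ ∈ X with ‖y − yδ‖ ≤ δ, and every xαδ ∈ M satisfying F(xαδ) + α(xαδ − x̄) = yδ with the a priori choice α = √δ, one has the logarithmic rate ‖xαδ − x†‖ ≤ K/√(−ln δ). -/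

import Mathlib

open RealInnerProductSpace

set_option maxHeartbeats 1000000 in
/-- Logarithmic rate under the logarithmic Lavrentiev-type variational source condition
φ(t) = 1/(−ln t) (with φ(0) = 0; note that in Lean `Real.log 0 = 0`, so
`1 / (-Real.log t)` extends φ by 0 at t = 0): with the a priori choice α = √δ one gets
‖x_α^δ − x†‖ = O(1/√(−ln δ)). -/
theorem stmt_14 {X : Type*} [NormedAddCommGroup X] [InnerProductSpace ℝ X] [CompleteSpace X]
    (F : X → X) (hmono : ∀ x x' : X, 0 ≤ ⟪F x - F x', x - x'⟫)
    (y xbar xdag : X) (hsol : F xdag = y)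
    (β : ℝ) (hβ0 : 0 ≤ β) (hβ1 : β < 1)
    (M : Set X)
    (hsmall : ∀ x ∈ M, ⟪F x - F xdag, x - xdag⟫ < Real.exp (-1))
    (hvsc : ∀ x ∈ M,
      ⟪xdag - xbar, xdag - x⟫ ≤
        β * ‖x - xdag‖ ^ 2 + 1 / (-Real.log ⟪F x - F xdag, x - xdag⟫)) :
    ∃ K : ℝ, 0 < K ∧ ∃ δ₀ ∈ Set.Ioo (0:ℝ) 1,
      ∀ δ : ℝ, 0 < δ → δ ≤ δ₀ → ∀ yδ : X, ‖y - yδ‖ ≤ δ →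
        ∀ xad ∈ M, F xad + Real.sqrt δ • (xad - xbar) = yδ →
          ‖xad - xdag‖ ≤ K / Real.sqrt (-Real.log δ) := by
  set c : ℝ := 1 - β with hc
  have hc0 : 0 < c := by simp [hc]; linarith
  have hc1 : c ≤ 1 := by simp [hc]; linarith
  have hδ₀1 : (c/3)^4 < 1 := by
    have h13 : c/3 ≤ 1/3 := by linarith
    have : (c/3)^4 ≤ (1/3:ℝ)^4 := pow_le_pow_left₀ (by positivity) h13 4
    nlinarith
  refine ⟨5 / c, by positivity, (c/3)^4, ⟨by positivity, hδ₀1⟩, ?_⟩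
  intro δ hδ0 hδδ0 yδ hyδ xad hxM heq
  set α : ℝ := Real.sqrt δ with hα
  set e : ℝ := ‖xad - xdag‖ with he
  set γ : ℝ := ⟪F xad - F xdag, xad - xdag⟫ with hγ
  set φγ : ℝ := 1 / (-Real.log γ) with hφ
  have hγ0 : 0 ≤ γ := hmono _ _
  have hγe : γ < Real.exp (-1) := hsmall xad hxM
  have hα0 : 0 < α := Real.sqrt_pos.mpr hδ0
  have hδ1 : δ < 1 := lt_of_le_of_lt hδδ0 hδ₀1
  have hδsq : δ = α^2 := (Real.sq_sqrt hδ0.le).symm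
  have hα1 : α ≤ 1 := Real.sqrt_le_one.mpr hδ1.le
  have hδα : δ ≤ α := by
    calc δ = α * α := by rw [hδsq]; ring
      _ ≤ α * 1 := mul_le_mul_of_nonneg_left hα1 hα0.le
      _ = α := mul_one _
  have he0 : 0 ≤ e := norm_nonneg _
  -- key identity
  have hyd : yδ - y = (F xad - F xdag) + α • (xad - xdag) + α • (xdag - xbar) := by
    rw [← heq, ← hsol]; module
  have h1 : ⟪yδ - y, xad - xdag⟫ = γ + α * e^2 + α * ⟪xdag - xbar, xad - xdag⟫ := by
    rw [hyd]
    simp only [inner_add_left, real_inner_smul_left, real_inner_self_eq_norm_sq]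
    rfl
  have hflip : ⟪xdag - xbar, xad - xdag⟫ = -⟪xdag - xbar, xdag - xad⟫ := by
    rw [← inner_neg_right]
    congr 1
    abel
  have h2 : ⟪yδ - y, xad - xdag⟫ ≤ δ * e := by
    calc ⟪yδ - y, xad - xdag⟫ ≤ ‖yδ - y‖ * ‖xad - xdag‖ := real_inner_le_norm _ _
      _ ≤ δ * e := by
          apply mul_le_mul_of_nonneg_right _ he0
          rw [norm_sub_rev]; exact hyδ
  have h3 : ⟪xdag - xbar, xdag - xad⟫ ≤ β * e^2 + φγ := hvsc xad hxM
  have main : γ + α * e^2 ≤ δ * e + α * (β * e^2 + φγ) := by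
    have h3' : α * ⟪xdag - xbar, xdag - xad⟫ ≤ α * (β * e^2 + φγ) :=
      mul_le_mul_of_nonneg_left h3 hα0.le
    have := h1
    rw [hflip] at this
    linarith [h2]
  have hAexp : c * (α * e^2) = α * e^2 - β * (α * e^2) := by rw [hc]; ring
  have hA : c * (α * e^2) ≤ δ * e + α * φγ := by linarith [main, hγ0, hAexp]
  have hB : γ ≤ δ * e + α * φγ := by
    have hnn : 0 ≤ α * (1 - β) * e^2 :=
      mul_nonneg (mul_nonneg hα0.le (by linarith)) (sq_nonneg e)
    linarith [main, hnn]
  -- bounds on φγ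
  have hφ0 : 0 ≤ φγ := by
    rcases eq_or_lt_of_le hγ0 with h | h
    · simp [hφ, ← h]
    · have hlog : Real.log γ < -1 := by
        have := Real.log_lt_log h hγe
        rwa [Real.log_exp] at this
      have : 0 < -Real.log γ := by linarith
      positivity
  have hφ1 : φγ ≤ 1 := by
    rcases eq_or_lt_of_le hγ0 with h | h
    · simp [hφ, ← h]
    · have hlog : Real.log γ < -1 := by
        have := Real.log_lt_log h hγe
        rwa [Real.log_exp] at this
      rw [hφ, div_le_one (by linarith)]
      linarith
  -- e ≤ 2/c, i.e. c*e ≤ 2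
  have hce2 : c * e ≤ 2 := by
    have h5 : δ * e ≤ α * e := mul_le_mul_of_nonneg_right hδα he0
    have h6 : α * φγ ≤ α * 1 := mul_le_mul_of_nonneg_left hφ1 hα0.le
    have h7 : α * (c * e^2) ≤ α * (e + 1) := by linarith [hA]
    have h4 : c * e^2 ≤ e + 1 := le_of_mul_le_mul_left h7 hα0
    linarith [mul_le_mul_of_nonneg_left h4 hc0.le, sq_nonneg (c*e - 2), hc1, hc0, he0]
  -- γ ≤ 3α/c
  have hγα : γ ≤ 3 * α / c := by
    have t1 : c * γ ≤ c * (δ * e + α * φγ) := mul_le_mul_of_nonneg_left hB hc0.le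
    have t2 : δ * (c * e) ≤ δ * 2 := mul_le_mul_of_nonneg_left hce2 hδ0.le
    have t3 : c * (α * φγ) ≤ 1 * (α * φγ) :=
      mul_le_mul_of_nonneg_right hc1 (mul_nonneg hα0.le hφ0)
    have t4 : α * φγ ≤ α * 1 := mul_le_mul_of_nonneg_left hφ1 hα0.le
    have hcγ : c * γ ≤ 3 * α := by linarith [t1, t2, t3, t4, hδα]
    rw [le_div_iff₀ hc0]
    linarith [hcγ]
  set L : ℝ := -Real.log δ with hL
  have hLpos : 0 < L := by
    have := Real.log_neg hδ0 hδ1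
    simp only [hL]; linarith
  -- φγ * L ≤ 4
  have hφL : φγ * L ≤ 4 := by
    rcases eq_or_lt_of_le hγ0 with h | h
    · simp [hφ, ← h]
    · have h3c : (0:ℝ) < 3 * α / c := by positivity
      have hlog1 : Real.log γ ≤ Real.log (3 * α / c) := Real.log_le_log h hγα
      have hlogα : Real.log α = Real.log δ / 2 := Real.log_sqrt hδ0.le
      have hlog2 : Real.log (3 * α / c) = Real.log (3 / c) + Real.log δ / 2 := by
        rw [show 3 * α / c = (3 / c) * α by ring,
          Real.log_mul (by positivity) hα0.ne', hlogα]
      have hlogδ : Real.log δ ≤ 4 * Real.log (c / 3) := by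
        have h := Real.log_le_log hδ0 hδδ0
        rw [Real.log_pow] at h
        exact_mod_cast h
      have hlogc : Real.log (c / 3) = -Real.log (3 / c) := by
        rw [← Real.log_inv]
        congr 1
        rw [inv_div]
      have hkey : L / 4 ≤ -Real.log γ := by
        simp only [hL]
        linarith [hlog1, hlog2, hlogδ, hlogc]
      have hlogγ : 0 < -Real.log γ := lt_of_lt_of_le (by positivity) hkey
      have hφle : φγ ≤ 4 / L := by
        rw [hφ, div_le_div_iff₀ hlogγ hLpos]
        linarith [hkey]
      calc φγ * L ≤ (4 / L) * L := mul_le_mul_of_nonneg_right hφle hLpos.le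
        _ = 4 := by field_simp
  set s : ℝ := Real.sqrt L with hs
  have hs0 : 0 < s := Real.sqrt_pos.mpr hLpos
  have hs2 : s^2 = L := Real.sq_sqrt hLpos.le
  have hαs : α * s ≤ 1 := by
    have hδL : δ * L ≤ 1 := by
      have h := Real.log_le_sub_one_of_pos (show (0:ℝ) < 1/δ by positivity)
      rw [Real.log_div one_ne_zero hδ0.ne', Real.log_one] at h
      have hL' : -Real.log δ ≤ 1/δ := by linarith
      calc δ * L ≤ δ * (1/δ) := mul_le_mul_of_nonneg_left (by simpa [hL] using hL') hδ0.le
        _ = 1 := by field_simp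
    calc α * s = Real.sqrt (δ * L) := by rw [hα, hs, ← Real.sqrt_mul hδ0.le]
      _ ≤ Real.sqrt 1 := Real.sqrt_le_sqrt hδL
      _ = 1 := Real.sqrt_one
  -- c e² ≤ α e + φγ
  have hA' : c * e^2 ≤ α * e + φγ := by
    have h7 : α * (c * e^2) ≤ α * (α * e + φγ) := by
      have : δ * e = α * (α * e) := by rw [hδsq]; ring
      linarith [hA, this]
    exact le_of_mul_le_mul_left h7 hα0
  have hw0 : 0 ≤ e * s := mul_nonneg he0 hs0.le
  have hw : c * (e * s)^2 ≤ e * s + 4 := by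
    have h1' : c * e^2 * s^2 ≤ (α * e + φγ) * s^2 :=
      mul_le_mul_of_nonneg_right hA' (sq_nonneg s)
    have h2' : α * e * s^2 ≤ e * s := by
      calc α * e * s^2 = (α * s) * (e * s) := by ring
        _ ≤ 1 * (e * s) := mul_le_mul_of_nonneg_right hαs hw0
        _ = e * s := one_mul _
    have h3' : φγ * s^2 ≤ 4 := by rw [hs2]; exact hφL
    linarith [h1', h2', h3']
  have hwc : c * (e * s) ≤ 5 := by
    linarith [mul_le_mul_of_nonneg_left hw hc0.le, sq_nonneg (c * (e * s) - 5), hc1]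
  rw [le_div_iff₀ hs0, le_div_iff₀ hc0]
  linarith [hwc]
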